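/- In the free unital algebra F⟨a,b,c⟩ on letters a, b, c with the derivation ∂ determined by ∂(a)=∂(c)=∂(e)=0, ∂(b)=c−a (extended as a degree-1 derivation with Koszul signs, where deg of a word is minus the number of b's), define the shifted product x ∘ y = x ⋄ c ⋄ y and the operators d_i inserting the letter a at position i. Setting L_1 = e and L_n = b^{⋄(n−1)} for n ≥ 2, one has for every k ≥ 2: ∂(L_k) = Σ_{j=1}^{k−1} (−1)^{j+1} L_j ∘ L_{k−j} + Σ_{j=1}^{k−1} (−1)^j d_j(L_{k−1}). -/

import Mathlib

/-
STATEMENT 2: In the free unital algebra on {a,b,c} (words, 0 = a, 1 = b, 2 = c) with the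
degree-1 derivation ∂ determined by ∂a = ∂c = 0, ∂b = c - a (Koszul signs w.r.t.
concatenation ⋄, degree of a word = -(# of b's)), with the shifted product
x ∘ y = x ⋄ c ⋄ y, the insertion operators d_i (inserting the letter a at position i)
and L_1 = e, L_n = b^{⋄(n-1)}, one has for all k ≥ 2:
  ∂(L_k) = Σ_{j=1}^{k-1} (-1)^{j+1} L_j ∘ L_{k-j} + Σ_{j=1}^{k-1} (-1)^j d_j (L_{k-1}).
-/

noncomputable section

abbrev Word := FreeMonoid (Fin 3)
abbrev Om : Type := MonoidAlgebra ℝ Word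

def W (w : Word) : Om := MonoidAlgebra.single w 1

def aW : Word := FreeMonoid.of 0
def bW : Word := FreeMonoid.of 1
def cW : Word := FreeMonoid.of 2

def bcount (w : Word) : ℕ := (FreeMonoid.toList w).count 1

/-- the operator `d_i`: insertion of the letter `a` at position `i` (1-indexed). -/
def dIns (i : ℕ) : Om →ₗ[ℝ] Om :=
  MonoidAlgebra.mapDomainLinearMap ℝ ℝ
    (fun w : Word => FreeMonoid.ofList ((FreeMonoid.toList w).insertIdx (i - 1) (0 : Fin 3)))

/-- `L 1 = e` (the empty word) and `L n = b^{⋄(n-1)}` for `n ≥ 2`. -/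
def L (n : ℕ) : Om := W (FreeMonoid.ofList (List.replicate (n - 1) (1 : Fin 3)))

def B (n : ℕ) : Om := W (FreeMonoid.ofList (List.replicate n (1 : Fin 3)))

lemma W_mul (w w' : Word) : W w * W w' = W (w * w') := by
  simp [W, MonoidAlgebra.single_mul_single]

lemma b_mul_B (n : ℕ) : W bW * B n = B (n + 1) := by
  rw [B, B, W_mul]
  congr 1

lemma B_mul_W_mul_B (m n : ℕ) (x : Fin 3) :
    B m * W (FreeMonoid.of x) * B n
      = W (FreeMonoid.ofList (List.replicate m (1 : Fin 3) ++ x :: List.replicate n (1 : Fin 3))) := by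
  rw [B, B, W_mul, W_mul]
  congr 1
  show FreeMonoid.ofList _ * FreeMonoid.ofList [x] * FreeMonoid.ofList _ = _
  rw [← FreeMonoid.ofList_append, ← FreeMonoid.ofList_append]
  simp

lemma insertIdx_replicate (x y : Fin 3) (i n : ℕ) (h : i ≤ n) :
    (List.replicate n y).insertIdx i x = List.replicate i y ++ x :: List.replicate (n - i) y := by
  induction i generalizing n with
  | zero => simp
  | succ i ih =>
    cases n with
    | zero => omega
    | succ n => simp [List.replicate_succ, List.insertIdx_succ_cons, ih (n := n) (by omega)]

lemma dIns_B (j n : ℕ) (h1 : 1 ≤ j) (h2 : j ≤ n + 1) :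
    dIns j (B n) = W (FreeMonoid.ofList
      (List.replicate (j-1) (1 : Fin 3) ++ (0 : Fin 3) :: List.replicate (n - (j-1)) (1 : Fin 3))) := by
  rw [dIns, B, W, MonoidAlgebra.mapDomainLinearMap_single]
  congr 2
  show (List.replicate n (1:Fin 3)).insertIdx (j-1) 0 = _
  rw [insertIdx_replicate _ _ _ _ (by omega)]

theorem stmt2 (D : Om →ₗ[ℝ] Om)
    (ha : D (W aW) = 0) (hc : D (W cW) = 0) (hb : D (W bW) = W cW - W aW)
    (hleib : ∀ w w' : Word,
      D (W (w * w')) = D (W w) * W w' + ((-1 : ℝ) ^ (bcount w)) • (W w * D (W w'))) :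
    ∀ k : ℕ, 2 ≤ k →
      D (L k) = (∑ j ∈ Finset.Ico 1 k, ((-1 : ℝ) ^ (j + 1)) • (L j * W cW * L (k - j)))
        + ∑ j ∈ Finset.Ico 1 k, ((-1 : ℝ) ^ j) • dIns j (L (k - 1)) := by
  have hDone : D (W 1) = 0 := by
    have := hleib 1 1
    simp only [mul_one, bcount] at this
    simp only [show FreeMonoid.toList (1 : Word) = [] from rfl, List.count_nil, pow_zero,
      one_smul] at this
    have h1 : W (1 : Word) = 1 := rfl
    rw [h1, mul_one, one_mul] at this

    rw [h1] at *
    exact (left_eq_add.mp this)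
  have hB0 : B 0 = 1 := rfl
  have key : ∀ n, D (B n) = ∑ i ∈ Finset.range n,
      ((-1:ℝ)^i) • (B i * (W cW - W aW) * B (n - 1 - i)) := by
    intro n
    induction n with
    | zero => simpa [B] using hDone
    | succ n ih =>
      have hsplit : B (n+1) = W (bW * FreeMonoid.ofList (List.replicate n 1)) := by
        rw [← b_mul_B, B, W_mul]
      rw [hsplit, hleib]
      have hbc : bcount bW = 1 := rfl
      rw [hbc, ← B, hb, ih, Finset.sum_range_succ']
      have hf0 : ((-1:ℝ))^(0:ℕ) • (B 0 * (W cW - W aW) * B (n + 1 - 1 - 0)) =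
          (W cW - W aW) * B n := by
        simp [hB0]
      rw [hf0]
      rw [pow_one, neg_smul, one_smul, Finset.mul_sum, ← Finset.sum_neg_distrib]
      rw [add_comm]
      congr 1
      refine Finset.sum_congr rfl (fun i hi => ?_)
      have hidx : n + 1 - 1 - (i + 1) = n - 1 - i := by omega
      rw [hidx, pow_succ, mul_smul, mul_smul_comm, ← smul_neg]
      congr 1
      rw [neg_one_smul]
      congr 1
      rw [← mul_assoc, ← mul_assoc, b_mul_B]
  intro k hk
  have hL : L k = B (k - 1) := rfl
  rw [hL, key]
  have hsub : ∀ i ∈ Finset.range (k-1),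
      ((-1:ℝ))^i • (B i * (W cW - W aW) * B (k - 1 - 1 - i)) =
      ((-1:ℝ))^i • (B i * W cW * B (k - 1 - 1 - i))
        - ((-1:ℝ))^i • (B i * W aW * B (k - 1 - 1 - i)) := by
    intro i _
    rw [← smul_sub]
    congr 1
    rw [mul_sub, sub_mul]
  rw [Finset.sum_congr rfl hsub, Finset.sum_sub_distrib]
  rw [Finset.sum_Ico_eq_sum_range, Finset.sum_Ico_eq_sum_range, sub_eq_add_neg]
  congr 1
  · refine Finset.sum_congr rfl (fun i hi => ?_)
    simp only [Finset.mem_range] at hi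
    have h1 : L (1 + i) = B i := by
      show B (1 + i - 1) = B i
      congr 1; omega
    have h2 : L (k - (1 + i)) = B (k - 1 - 1 - i) := by
      show B (k - (1 + i) - 1) = B (k - 1 - 1 - i)
      congr 1; omega
    have h3 : ((-1:ℝ))^(1 + i + 1) = (-1)^i := by
      rw [show 1 + i + 1 = i + 2 by omega, pow_add]; norm_num
    rw [h1, h2, h3]
  · rw [← Finset.sum_neg_distrib]
    refine Finset.sum_congr rfl (fun i hi => ?_)
    simp only [Finset.mem_range] at hi
    have hLk : L (k - 1) = B (k - 2) := by
      show B (k - 1 - 1) = B (k - 2)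
      rw [show k - 1 - 1 = k - 2 from by omega]
    rw [hLk, dIns_B (1+i) (k-2) (by omega) (by omega)]
    have h4 : (1 + i) - 1 = i := by omega
    rw [h4]
    have h5 : B i * W aW * B (k - 1 - 1 - i) =
        W (FreeMonoid.ofList (List.replicate i (1:Fin 3) ++ (0:Fin 3) ::
          List.replicate (k - 2 - i) (1:Fin 3))) := by
      have := B_mul_W_mul_B i (k - 1 - 1 - i) 0
      rw [show k - 1 - 1 - i = k - 2 - i by omega] at this ⊢
      exact this
    rw [h5]
    have h6 : ((-1:ℝ))^(1 + i) = -((-1:ℝ))^i := by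
      rw [show 1 + i = i + 1 by omega, pow_succ]; ring
    rw [h6, neg_smul]


end
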